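/- For any positive reals a, b, min((5a + 2b)/a, (6a + 3b)/b) ≤ 4 + √13. -/

import Mathlib

/-- For positive reals `a, b`, `min ((5a + 2b)/a) ((6a + 3b)/b) ≤ 4 + √13`. -/
theorem min_ratio_le_four_add_sqrt_thirteen (a b : ℝ) (ha : 0 < a) (hb : 0 < b) :
    min ((5 * a + 2 * b) / a) ((6 * a + 3 * b) / b) ≤ 4 + Real.sqrt 13 := by
  set s := Real.sqrt 13 with hs
  have hs2 : s ^ 2 = 13 := Real.sq_sqrt (by norm_num)
  have hs3 : (3 : ℝ) ≤ s := by
    have := Real.sqrt_le_sqrt (show (9:ℝ) ≤ 13 by norm_num)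
    simpa [Real.sqrt_eq_iff_eq_sq, show Real.sqrt 9 = 3 by
      rw [show (9:ℝ) = 3^2 by norm_num, Real.sqrt_sq]; norm_num] using this
  rcases le_or_gt (2 * b) ((s - 1) * a) with h | h
  · refine le_trans (min_le_left _ _) ?_
    rw [div_le_iff₀ ha]
    nlinarith
  · refine le_trans (min_le_right _ _) ?_
    rw [div_le_iff₀ hb]
    nlinarith [mul_pos (show (0:ℝ) < s + 1 by linarith) hb,
      mul_lt_mul_of_pos_left h (show (0:ℝ) < s + 1 by linarith)]
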